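/- If a field K is not algebraically closed, then for every n ≥ 2 there exists a homogeneous polynomial in n variables over K whose only zero in K^n is (0,...,0). In particular there exists a binary form s ∈ K[x,y] with no zero in K² other than (0,0). -/

import Mathlib

open MvPolynomial Finset

/-- From a monic polynomial with no root, build an anisotropic binary form. -/
lemma binform_aux {K : Type*} [Field K] (h : ¬ IsAlgClosed K) :
    ∃ (s : MvPolynomial (Fin 2) K) (d : ℕ), 0 < d ∧ s.IsHomogeneous d ∧
      ∀ v : Fin 2 → K, MvPolynomial.eval v s = 0 → v = 0 := by
  have H : ¬ ∀ p : Polynomial K, p.Monic → Irreducible p → ∃ x, p.eval x = 0 :=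
    fun H => h (IsAlgClosed.of_exists_root K H)
  push_neg at H
  obtain ⟨f, hm, hirr, hroot⟩ := H
  set d := f.natDegree with hd
  have hd0 : 0 < d := hirr.natDegree_pos
  refine ⟨∑ i ∈ Finset.range (d + 1),
      MvPolynomial.C (f.coeff i) * (MvPolynomial.X 0 ^ i * MvPolynomial.X 1 ^ (d - i)),
      d, hd0, ?_, ?_⟩
  · apply MvPolynomial.IsHomogeneous.sum
    intro i hi
    have h1 : ((MvPolynomial.X 0 ^ i * MvPolynomial.X 1 ^ (d - i)) :
        MvPolynomial (Fin 2) K).IsHomogeneous d := by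
      have := ((MvPolynomial.isHomogeneous_X K (0 : Fin 2)).pow i).mul
        ((MvPolynomial.isHomogeneous_X K (1 : Fin 2)).pow (d - i))
      have hi' : 1 * i + 1 * (d - i) = d := by
        simp only [Finset.mem_range] at hi; omega
      rwa [hi'] at this
    exact h1.C_mul _
  · intro v hv
    simp only [map_sum, MvPolynomial.eval_mul, MvPolynomial.eval_C,
      MvPolynomial.eval_pow, MvPolynomial.eval_X] at hv
    -- hv : ∑ i in range (d+1), f.coeff i * (v 0 ^ i * v 1 ^ (d - i)) = 0
    by_cases hb : v 1 = 0
    · rw [Finset.sum_eq_single d] at hv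
      · simp only [hm.coeff_natDegree, ← hd, Nat.sub_self, pow_zero, mul_one, one_mul] at hv
        have ha : v 0 = 0 := pow_eq_zero_iff hd0.ne' |>.mp
            (by rwa [show f.coeff d = 1 from hm.coeff_natDegree, one_mul] at hv)
        funext i
        fin_cases i <;> simpa
      · intro i hi hne
        have : 0 < d - i := by
          simp only [Finset.mem_range] at hi; omega
        rw [hb, zero_pow this.ne', mul_zero, mul_zero]
      · intro hcon
        exact ((hcon (Finset.self_mem_range_succ d))).elim
    · exfalso
      apply hroot (v 0 / v 1)
      have key : f.eval (v 0 / v 1) * v 1 ^ d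
          = ∑ i ∈ Finset.range (d + 1), f.coeff i * (v 0 ^ i * v 1 ^ (d - i)) := by
        rw [Polynomial.eval_eq_sum_range, Finset.sum_mul]
        apply Finset.sum_congr rfl
        intro i hi
        have hi' : i ≤ d := by simp only [Finset.mem_range] at hi; omega
        rw [div_pow, mul_assoc]
        congr 1
        rw [pow_sub₀ _ hb hi', div_mul_eq_mul_div, mul_div_assoc, div_eq_mul_inv]
      rw [hv] at key
      exact (mul_eq_zero.mp key).resolve_right (pow_ne_zero d hb)

theorem stmt7 {K : Type*} [Field K] (h : ¬ IsAlgClosed K) :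
    (∀ n : ℕ, 2 ≤ n → ∃ (p : MvPolynomial (Fin n) K) (d : ℕ), 0 < d ∧
      p.IsHomogeneous d ∧ ∀ v : Fin n → K, MvPolynomial.eval v p = 0 → v = 0) ∧
    ∃ (s : MvPolynomial (Fin 2) K) (d : ℕ), 0 < d ∧ s.IsHomogeneous d ∧
      ∀ a b : K, MvPolynomial.eval ![a, b] s = 0 → a = 0 ∧ b = 0 := by
  obtain ⟨s, d, hd, hsh, hsz⟩ := binform_aux h
  constructor
  · intro n hn
    induction n, hn using Nat.le_induction with
    | base => exact ⟨s, d, hd, hsh, hsz⟩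
    | succ n hn ih =>
      obtain ⟨p, e, he, hph, hpz⟩ := ih
      set g : Fin 2 → MvPolynomial (Fin (n + 1)) K :=
        ![MvPolynomial.rename Fin.castSucc p, MvPolynomial.X (Fin.last n) ^ e] with hg
      have hgh : ∀ i, (g i).IsHomogeneous e := by
        intro i
        fin_cases i
        · exact hph.rename_isHomogeneous
        · have := (MvPolynomial.isHomogeneous_X K (Fin.last n)).pow e
          simpa [hg] using this
      refine ⟨MvPolynomial.aeval g s, e * d, Nat.mul_pos he hd,
        hsh.aeval g hgh, ?_⟩
      intro v hv
      have aev : ∀ {m : ℕ} (w : Fin m → K) (q : MvPolynomial (Fin m) K),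
          MvPolynomial.aeval w q = MvPolynomial.eval w q := fun w q =>
        RingHom.congr_fun (MvPolynomial.coe_aeval_eq_eval w) q
      have hv' : MvPolynomial.aeval v (MvPolynomial.aeval g s) = 0 := by
        rw [aev]; exact hv
      rw [MvPolynomial.comp_aeval_apply] at hv'
      have hv'' : MvPolynomial.eval (fun i => MvPolynomial.aeval v (g i)) s = 0 := by
        rw [← aev]; exact hv'
      have hzero := hsz _ hv''
      have h0 : MvPolynomial.aeval v (g 0) = 0 := congrFun hzero 0
      have h1 : MvPolynomial.aeval v (g 1) = 0 := congrFun hzero 1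
      simp only [hg, Matrix.cons_val_zero, Matrix.cons_val_one, Matrix.head_cons] at h0 h1
      have hp0 : v ∘ Fin.castSucc = 0 := by
        apply hpz
        rw [← MvPolynomial.eval_rename, ← aev]
        exact h0
      have hlast : v (Fin.last n) = 0 := by
        have : (v (Fin.last n)) ^ e = 0 := by simpa using h1
        exact pow_eq_zero_iff he.ne' |>.mp this
      funext i
      induction i using Fin.lastCases with
      | last => exact hlast
      | cast j => exact congrFun hp0 j
  · refine ⟨s, d, hd, hsh, fun a b hab => ?_⟩
    have := hsz ![a, b] hab
    constructor
    · have := congrFun this 0; simpa using this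
    · have := congrFun this 1; simpa using this
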